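/- If G and H are finite graphs, each with at least one vertex, then gp(G + H) = max{ω(G) + ω(H), ρ(G), ρ(H)}. -/

import Mathlib

namespace SimpleGraph

variable {V : Type*}

/-- `S` is a general position set of `G`: no vertex of `S` lies on a geodesic
(shortest path) between two other vertices of `S`. -/
def IsGPSet (G : SimpleGraph V) (S : Set V) : Prop :=
  ∀ ⦃u v w : V⦄, u ∈ S → v ∈ S → w ∈ S → u ≠ v → u ≠ w → v ≠ w →
    ∀ p : G.Walk u v, p.IsPath → p.length = G.dist u v → w ∉ p.support

/-- The general position number of `G`: the maximum cardinality of a general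
position set of `G`. -/
noncomputable def gpNumber (G : SimpleGraph V) : ℕ :=
  sSup {n | ∃ S : Set V, G.IsGPSet S ∧ n = S.ncard}

/-- `ρ(G)`: the maximum number of vertices in a union of pairwise independent
complete subgraphs of `G`, where complete subgraphs `Q`, `Q'` are independent
if `d_G(u,u') ≥ 2` for every `u ∈ Q` and `u' ∈ Q'`. -/
noncomputable def rho (G : SimpleGraph V) : ℕ :=
  sSup {n | ∃ 𝒬 : Finset (Finset V),
    (∀ Q ∈ 𝒬, G.IsClique (Q : Set V)) ∧
    (∀ Q ∈ 𝒬, ∀ Q' ∈ 𝒬, Q ≠ Q' → ∀ u ∈ Q, ∀ u' ∈ Q', 2 ≤ G.edist u u') ∧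
    n = (⋃ Q ∈ 𝒬, (Q : Set V)).ncard}

/-- A graph is complete multipartite iff non-adjacency is transitive. -/
def IsCompleteMultipartite' (G : SimpleGraph V) : Prop := Transitive (¬G.Adj · ·)

/-- `η(G)`: the maximum order of an induced complete multipartite subgraph of
the complement of `G`. -/
noncomputable def eta (G : SimpleGraph V) : ℕ :=
  sSup {n | ∃ B : Set V, (Gᶜ.induce B).IsCompleteMultipartite' ∧ n = B.ncard}

/-- An independent set of a graph. -/
def IsIndepSet' (G : SimpleGraph V) (S : Set V) : Prop :=
  S.Pairwise fun u v => ¬ G.Adj u v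

/-- The independence number `α(G)`. -/
noncomputable def indepNum' (G : SimpleGraph V) : ℕ :=
  sSup {n | ∃ S : Set V, G.IsIndepSet' S ∧ n = S.ncard}

end SimpleGraph

/-- The Kneser graph `K(n,k)`: vertices are the `k`-element subsets of an
`n`-element set, two vertices adjacent iff the corresponding sets are disjoint. -/
def kneserGraph (n k : ℕ) : SimpleGraph {s : Finset (Fin n) // s.card = k} where
  Adj a b := Disjoint a.1 b.1 ∧ a ≠ b
  symm := by
    constructor
    rintro a b ⟨h1, h2⟩
    exact ⟨h1.symm, h2.symm⟩
  loopless := by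
    constructor
    rintro a ⟨-, h⟩
    exact h rfl

/-- The join `G + H` of two (disjoint) graphs: the disjoint union of `G` and
`H` together with all edges between a vertex of `G` and a vertex of `H`. -/
def graphJoin {α β : Type*} (G : SimpleGraph α) (H : SimpleGraph β) :
    SimpleGraph (α ⊕ β) where
  Adj x y := match x, y with
    | Sum.inl a, Sum.inl a' => G.Adj a a'
    | Sum.inr b, Sum.inr b' => H.Adj b b'
    | _, _ => True
  symm := by
    constructor
    rintro (a | b) (a' | b') h <;> simp_all
    exacts [G.adj_symm h, H.adj_symm h]
  loopless := by
    constructor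
    rintro (a | b) h <;> simp_all

section Aux

open SimpleGraph

variable {α β : Type*} {G : SimpleGraph α} {H : SimpleGraph β}

lemma graphJoin_adj_inl_inl {a a' : α} :
    (graphJoin G H).Adj (Sum.inl a) (Sum.inl a') ↔ G.Adj a a' := Iff.rfl

lemma graphJoin_adj_inr_inr {b b' : β} :
    (graphJoin G H).Adj (Sum.inr b) (Sum.inr b') ↔ H.Adj b b' := Iff.rfl

lemma graphJoin_adj_inl_inr (a : α) (b : β) :
    (graphJoin G H).Adj (Sum.inl a) (Sum.inr b) := trivial

lemma graphJoin_adj_inr_inl (b : β) (a : α) :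
    (graphJoin G H).Adj (Sum.inr b) (Sum.inl a) := trivial

lemma walk_support_of_length_one {V : Type*} {J : SimpleGraph V} {u v : V}
    (p : J.Walk u v) (h : p.length = 1) : p.support = [u, v] := by
  cases p with
  | nil => simp at h
  | cons h1 q =>
    cases q with
    | nil => simp
    | cons h2 r => simp [SimpleGraph.Walk.length_cons] at h

lemma walk_support_of_length_two {V : Type*} {J : SimpleGraph V} {u v : V}
    (p : J.Walk u v) (h : p.length = 2) :
    ∃ x, J.Adj u x ∧ J.Adj x v ∧ p.support = [u, x, v] := by
  cases p with
  | nil => simp at h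
  | cons h1 q =>
    cases q with
    | nil => simp at h
    | cons h2 r =>
      cases r with
      | nil => exact ⟨_, h1, h2, by simp⟩
      | cons h3 s => simp [SimpleGraph.Walk.length_cons] at h

lemma graphJoin_dist_two_left [Nonempty β] {a a' : α} (hne : a ≠ a')
    (hadj : ¬ G.Adj a a') : (graphJoin G H).dist (Sum.inl a) (Sum.inl a') = 2 := by
  obtain ⟨b⟩ := ‹Nonempty β›
  set p : (graphJoin G H).Walk (Sum.inl a) (Sum.inl a') :=
    Walk.cons (graphJoin_adj_inl_inr a b) (Walk.cons (graphJoin_adj_inr_inl b a') Walk.nil)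
  have h2 : (graphJoin G H).dist (Sum.inl a) (Sum.inl a') ≤ 2 := by
    simpa [p] using SimpleGraph.dist_le p
  have h0 : (graphJoin G H).dist (Sum.inl a) (Sum.inl a') ≠ 0 := by
    rw [SimpleGraph.dist_ne_zero_iff_ne_and_reachable]
    exact ⟨fun h => hne (Sum.inl_injective h), p.reachable⟩
  have h1 : (graphJoin G H).dist (Sum.inl a) (Sum.inl a') ≠ 1 := fun h =>
    hadj (graphJoin_adj_inl_inl.mp (SimpleGraph.dist_eq_one_iff_adj.mp h))
  omega

lemma graphJoin_dist_two_right [Nonempty α] {b b' : β} (hne : b ≠ b')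
    (hadj : ¬ H.Adj b b') : (graphJoin G H).dist (Sum.inr b) (Sum.inr b') = 2 := by
  obtain ⟨a⟩ := ‹Nonempty α›
  set p : (graphJoin G H).Walk (Sum.inr b) (Sum.inr b') :=
    Walk.cons (graphJoin_adj_inr_inl b a) (Walk.cons (graphJoin_adj_inl_inr a b') Walk.nil)
  have h2 : (graphJoin G H).dist (Sum.inr b) (Sum.inr b') ≤ 2 := by
    simpa [p] using SimpleGraph.dist_le p
  have h0 : (graphJoin G H).dist (Sum.inr b) (Sum.inr b') ≠ 0 := by
    rw [SimpleGraph.dist_ne_zero_iff_ne_and_reachable]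
    exact ⟨fun h => hne (Sum.inr_injective h), p.reachable⟩
  have h1 : (graphJoin G H).dist (Sum.inr b) (Sum.inr b') ≠ 1 := fun h =>
    hadj (graphJoin_adj_inr_inr.mp (SimpleGraph.dist_eq_one_iff_adj.mp h))
  omega

lemma two_le_enat_of_ne {e : ℕ∞} (h0 : e ≠ 0) (h1 : e ≠ 1) : 2 ≤ e := by
  cases e with
  | top => exact le_top
  | coe n =>
    have h0' : n ≠ 0 := by exact_mod_cast h0
    have h1' : n ≠ 1 := by exact_mod_cast h1
    exact_mod_cast (show 2 ≤ n by omega)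

lemma isGPSet_of_isClique {V : Type*} {J : SimpleGraph V} {S : Set V}
    (h : J.IsClique S) : J.IsGPSet S := by
  intro u v w hu hv hw huv huw hvw p hp hlen
  have hd : J.dist u v = 1 := SimpleGraph.dist_eq_one_iff_adj.mpr (h hu hv huv)
  rw [hd] at hlen
  rw [walk_support_of_length_one p hlen]
  simp only [List.mem_cons, List.not_mem_nil, or_false]
  push_neg
  exact ⟨Ne.symm huw, Ne.symm hvw⟩

lemma gp_bddAbove {V : Type*} [Finite V] (J : SimpleGraph V) :
    BddAbove {n | ∃ S : Set V, J.IsGPSet S ∧ n = S.ncard} := by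
  refine ⟨Nat.card V, ?_⟩
  rintro n ⟨S, -, rfl⟩
  simpa [Set.ncard_univ] using Set.ncard_le_ncard (Set.subset_univ S) Set.finite_univ

lemma rho_bddAbove {α : Type*} [Finite α] (G : SimpleGraph α) :
    BddAbove {n | ∃ 𝒬 : Finset (Finset α),
      (∀ Q ∈ 𝒬, G.IsClique (Q : Set α)) ∧
      (∀ Q ∈ 𝒬, ∀ Q' ∈ 𝒬, Q ≠ Q' → ∀ u ∈ Q, ∀ u' ∈ Q', 2 ≤ G.edist u u') ∧
      n = (⋃ Q ∈ 𝒬, (Q : Set α)).ncard} := by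
  refine ⟨Nat.card α, ?_⟩
  rintro n ⟨𝒬, -, -, rfl⟩
  simpa [Set.ncard_univ] using
    Set.ncard_le_ncard (Set.subset_univ (⋃ Q ∈ 𝒬, (Q : Set α))) Set.finite_univ

lemma ncard_le_rho_left [Fintype α] [Nonempty β] (G : SimpleGraph α) (H : SimpleGraph β)
    (A : Set α) (hS : (graphJoin G H).IsGPSet (Sum.inl '' A)) : A.ncard ≤ G.rho := by
  classical
  set J := graphJoin G H with hJdef
  set R : α → α → Prop := fun x y => x = y ∨ G.Adj x y with hRdef
  have hRrefl : ∀ x, R x x := fun x => Or.inl rfl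
  have hRsymm : ∀ {x y}, R x y → R y x := by
    rintro x y (rfl | h)
    · exact Or.inl rfl
    · exact Or.inr h.symm
  have hRtrans : ∀ {x y z}, x ∈ A → y ∈ A → z ∈ A → R x y → R y z → R x z := by
    intro x y z hx hy hz hxy hyz
    rcases hxy with rfl | hxy
    · exact hyz
    rcases hyz with rfl | hyz
    · exact Or.inr hxy
    by_cases hxz : x = z
    · exact Or.inl hxz
    by_cases haxz : G.Adj x z
    · exact Or.inr haxz
    exfalso
    have hxy' : x ≠ y := G.ne_of_adj hxy
    have hyz' : y ≠ z := G.ne_of_adj hyz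
    have hd : J.dist (Sum.inl x) (Sum.inl z) = 2 := graphJoin_dist_two_left hxz haxz
    set p : J.Walk (Sum.inl x) (Sum.inl z) :=
      Walk.cons (graphJoin_adj_inl_inl.mpr hxy)
        (Walk.cons (graphJoin_adj_inl_inl.mpr hyz) Walk.nil) with hp
    have hpath : p.IsPath := by
      rw [SimpleGraph.Walk.isPath_def]
      simp [hp, hxy', hyz', hxz]
    have hlen : p.length = J.dist (Sum.inl x) (Sum.inl z) := by simp [hp, hd]
    have hnot := hS ⟨x, hx, rfl⟩ ⟨z, hz, rfl⟩ ⟨y, hy, rfl⟩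
      (fun h => hxz (Sum.inl_injective h))
      (fun h => hxy' (Sum.inl_injective h))
      (fun h => hyz' (Sum.inl_injective h).symm) p hpath hlen
    apply hnot
    simp [hp]
  set Qf : α → Finset α := fun a => (Set.toFinite {x | x ∈ A ∧ R a x}).toFinset with hQfdef
  have hQfmem : ∀ {a x}, x ∈ Qf a ↔ x ∈ A ∧ R a x := by
    intro a x
    simp only [hQfdef, Set.Finite.mem_toFinset, Set.mem_setOf_eq]
  set 𝒬 : Finset (Finset α) := (Set.toFinite A).toFinset.image Qf with h𝒬def
  have h𝒬mem : ∀ {Q}, Q ∈ 𝒬 ↔ ∃ a ∈ A, Qf a = Q := by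
    intro Q
    simp only [h𝒬def, Finset.mem_image, Set.Finite.mem_toFinset]
  have hclique : ∀ Q ∈ 𝒬, G.IsClique (Q : Set α) := by
    intro Q hQ
    obtain ⟨a, ha, rfl⟩ := h𝒬mem.mp hQ
    intro x hx y hy hxy
    rw [Finset.mem_coe, hQfmem] at hx hy
    have hRxy : R x y := hRtrans hx.1 ha hy.1 (hRsymm hx.2) hy.2
    rcases hRxy with rfl | hh
    · exact absurd rfl hxy
    · exact hh
  have hclasseq : ∀ {a a' u u'}, a ∈ A → a' ∈ A → u ∈ Qf a → u' ∈ Qf a' → R u u' →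
      Qf a = Qf a' := by
    intro a a' u u' ha ha' hu hu' huu'
    rw [hQfmem] at hu hu'
    have hau' : R a u' := hRtrans ha hu.1 hu'.1 hu.2 huu'
    have haa' : R a a' := hRtrans ha hu'.1 ha' hau' (hRsymm hu'.2)
    ext x
    rw [hQfmem, hQfmem]
    constructor
    · rintro ⟨hx, hax⟩
      exact ⟨hx, hRtrans ha' ha hx (hRsymm haa') hax⟩
    · rintro ⟨hx, hax⟩
      exact ⟨hx, hRtrans ha ha' hx haa' hax⟩
  have hindep : ∀ Q ∈ 𝒬, ∀ Q' ∈ 𝒬, Q ≠ Q' → ∀ u ∈ Q, ∀ u' ∈ Q', 2 ≤ G.edist u u' := by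
    intro Q hQ Q' hQ' hne u hu u' hu'
    obtain ⟨a, ha, rfl⟩ := h𝒬mem.mp hQ
    obtain ⟨a', ha', rfl⟩ := h𝒬mem.mp hQ'
    have hnR : ¬ R u u' := fun h => hne (hclasseq ha ha' hu hu' h)
    refine two_le_enat_of_ne ?_ ?_
    · intro h
      exact hnR (Or.inl (SimpleGraph.edist_eq_zero_iff.mp h))
    · intro h
      exact hnR (Or.inr (SimpleGraph.edist_eq_one_iff_adj.mp h))
  have hunion : (⋃ Q ∈ 𝒬, (Q : Set α)) = A := by
    ext x
    simp only [Set.mem_iUnion, Finset.mem_coe, exists_prop]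
    constructor
    · rintro ⟨Q, hQ, hxQ⟩
      obtain ⟨a, ha, rfl⟩ := h𝒬mem.mp hQ
      exact (hQfmem.mp hxQ).1
    · intro hx
      exact ⟨Qf x, h𝒬mem.mpr ⟨x, hx, rfl⟩, hQfmem.mpr ⟨hx, hRrefl x⟩⟩
  have hmem : A.ncard ∈ {n | ∃ 𝒬 : Finset (Finset α),
      (∀ Q ∈ 𝒬, G.IsClique (Q : Set α)) ∧
      (∀ Q ∈ 𝒬, ∀ Q' ∈ 𝒬, Q ≠ Q' → ∀ u ∈ Q, ∀ u' ∈ Q', 2 ≤ G.edist u u') ∧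
      n = (⋃ Q ∈ 𝒬, (Q : Set α)).ncard} :=
    ⟨𝒬, hclique, hindep, by rw [hunion]⟩
  exact le_csSup (rho_bddAbove G) hmem

lemma ncard_le_rho_right [Fintype β] [Nonempty α] (G : SimpleGraph α) (H : SimpleGraph β)
    (B : Set β) (hS : (graphJoin G H).IsGPSet (Sum.inr '' B)) : B.ncard ≤ H.rho := by
  classical
  set J := graphJoin G H with hJdef
  set R : β → β → Prop := fun x y => x = y ∨ H.Adj x y with hRdef
  have hRrefl : ∀ x, R x x := fun x => Or.inl rfl
  have hRsymm : ∀ {x y}, R x y → R y x := by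
    rintro x y (rfl | h)
    · exact Or.inl rfl
    · exact Or.inr h.symm
  have hRtrans : ∀ {x y z}, x ∈ B → y ∈ B → z ∈ B → R x y → R y z → R x z := by
    intro x y z hx hy hz hxy hyz
    rcases hxy with rfl | hxy
    · exact hyz
    rcases hyz with rfl | hyz
    · exact Or.inr hxy
    by_cases hxz : x = z
    · exact Or.inl hxz
    by_cases haxz : H.Adj x z
    · exact Or.inr haxz
    exfalso
    have hxy' : x ≠ y := H.ne_of_adj hxy
    have hyz' : y ≠ z := H.ne_of_adj hyz
    have hd : J.dist (Sum.inr x) (Sum.inr z) = 2 := graphJoin_dist_two_right hxz haxz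
    set p : J.Walk (Sum.inr x) (Sum.inr z) :=
      Walk.cons (graphJoin_adj_inr_inr.mpr hxy)
        (Walk.cons (graphJoin_adj_inr_inr.mpr hyz) Walk.nil) with hp
    have hpath : p.IsPath := by
      rw [SimpleGraph.Walk.isPath_def]
      simp [hp, hxy', hyz', hxz]
    have hlen : p.length = J.dist (Sum.inr x) (Sum.inr z) := by simp [hp, hd]
    have hnot := hS ⟨x, hx, rfl⟩ ⟨z, hz, rfl⟩ ⟨y, hy, rfl⟩
      (fun h => hxz (Sum.inr_injective h))
      (fun h => hxy' (Sum.inr_injective h))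
      (fun h => hyz' (Sum.inr_injective h).symm) p hpath hlen
    apply hnot
    simp [hp]
  set Qf : β → Finset β := fun a => (Set.toFinite {x | x ∈ B ∧ R a x}).toFinset with hQfdef
  have hQfmem : ∀ {a x}, x ∈ Qf a ↔ x ∈ B ∧ R a x := by
    intro a x
    simp only [hQfdef, Set.Finite.mem_toFinset, Set.mem_setOf_eq]
  set 𝒬 : Finset (Finset β) := (Set.toFinite B).toFinset.image Qf with h𝒬def
  have h𝒬mem : ∀ {Q}, Q ∈ 𝒬 ↔ ∃ a ∈ B, Qf a = Q := by
    intro Q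
    simp only [h𝒬def, Finset.mem_image, Set.Finite.mem_toFinset]
  have hclique : ∀ Q ∈ 𝒬, H.IsClique (Q : Set β) := by
    intro Q hQ
    obtain ⟨a, ha, rfl⟩ := h𝒬mem.mp hQ
    intro x hx y hy hxy
    rw [Finset.mem_coe, hQfmem] at hx hy
    have hRxy : R x y := hRtrans hx.1 ha hy.1 (hRsymm hx.2) hy.2
    rcases hRxy with rfl | hh
    · exact absurd rfl hxy
    · exact hh
  have hclasseq : ∀ {a a' u u'}, a ∈ B → a' ∈ B → u ∈ Qf a → u' ∈ Qf a' → R u u' →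
      Qf a = Qf a' := by
    intro a a' u u' ha ha' hu hu' huu'
    rw [hQfmem] at hu hu'
    have hau' : R a u' := hRtrans ha hu.1 hu'.1 hu.2 huu'
    have haa' : R a a' := hRtrans ha hu'.1 ha' hau' (hRsymm hu'.2)
    ext x
    rw [hQfmem, hQfmem]
    constructor
    · rintro ⟨hx, hax⟩
      exact ⟨hx, hRtrans ha' ha hx (hRsymm haa') hax⟩
    · rintro ⟨hx, hax⟩
      exact ⟨hx, hRtrans ha ha' hx haa' hax⟩
  have hindep : ∀ Q ∈ 𝒬, ∀ Q' ∈ 𝒬, Q ≠ Q' → ∀ u ∈ Q, ∀ u' ∈ Q', 2 ≤ H.edist u u' := by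
    intro Q hQ Q' hQ' hne u hu u' hu'
    obtain ⟨a, ha, rfl⟩ := h𝒬mem.mp hQ
    obtain ⟨a', ha', rfl⟩ := h𝒬mem.mp hQ'
    have hnR : ¬ R u u' := fun h => hne (hclasseq ha ha' hu hu' h)
    refine two_le_enat_of_ne ?_ ?_
    · intro h
      exact hnR (Or.inl (SimpleGraph.edist_eq_zero_iff.mp h))
    · intro h
      exact hnR (Or.inr (SimpleGraph.edist_eq_one_iff_adj.mp h))
  have hunion : (⋃ Q ∈ 𝒬, (Q : Set β)) = B := by
    ext x
    simp only [Set.mem_iUnion, Finset.mem_coe, exists_prop]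
    constructor
    · rintro ⟨Q, hQ, hxQ⟩
      obtain ⟨a, ha, rfl⟩ := h𝒬mem.mp hQ
      exact (hQfmem.mp hxQ).1
    · intro hx
      exact ⟨Qf x, h𝒬mem.mpr ⟨x, hx, rfl⟩, hQfmem.mpr ⟨hx, hRrefl x⟩⟩
  have hmem : B.ncard ∈ {n | ∃ 𝒬 : Finset (Finset β),
      (∀ Q ∈ 𝒬, H.IsClique (Q : Set β)) ∧
      (∀ Q ∈ 𝒬, ∀ Q' ∈ 𝒬, Q ≠ Q' → ∀ u ∈ Q, ∀ u' ∈ Q', 2 ≤ H.edist u u') ∧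
      n = (⋃ Q ∈ 𝒬, (Q : Set β)).ncard} :=
    ⟨𝒬, hclique, hindep, by rw [hunion]⟩
  exact le_csSup (rho_bddAbove H) hmem

lemma isGPSet_inl_of_witness [Nonempty β] (G : SimpleGraph α) (H : SimpleGraph β)
    (𝒬 : Finset (Finset α)) (hclq : ∀ Q ∈ 𝒬, G.IsClique (Q : Set α))
    (hind : ∀ Q ∈ 𝒬, ∀ Q' ∈ 𝒬, Q ≠ Q' → ∀ u ∈ Q, ∀ u' ∈ Q', 2 ≤ G.edist u u') :
    (graphJoin G H).IsGPSet (Sum.inl '' (⋃ Q ∈ 𝒬, (Q : Set α))) := by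
  have hsame : ∀ {Q Q' x y}, Q ∈ 𝒬 → Q' ∈ 𝒬 → x ∈ Q → y ∈ Q' → G.Adj x y → Q = Q' := by
    intro Q Q' x y hQ hQ' hx hy hadj
    by_contra hne
    have h2 := hind Q hQ Q' hQ' hne x hx y hy
    have h1 : G.edist x y ≤ 1 := by
      simpa using SimpleGraph.edist_le (Walk.cons hadj Walk.nil)
    have : (2 : ℕ∞) ≤ 1 := h2.trans h1
    norm_num at this
  rintro u v w hu hv hw huv huw hvw p hp hlen
  obtain ⟨x, hx, rfl⟩ := hu
  obtain ⟨y, hy, rfl⟩ := hv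
  obtain ⟨z, hz, rfl⟩ := hw
  simp only [Set.mem_iUnion, Finset.mem_coe, exists_prop] at hx hy hz
  obtain ⟨Qx, hQx, hxQ⟩ := hx
  obtain ⟨Qy, hQy, hyQ⟩ := hy
  obtain ⟨Qz, hQz, hzQ⟩ := hz
  have hxy : x ≠ y := fun h => huv (by rw [h])
  by_cases hadj : G.Adj x y
  · have hd : (graphJoin G H).dist (Sum.inl x) (Sum.inl y) = 1 :=
      SimpleGraph.dist_eq_one_iff_adj.mpr (graphJoin_adj_inl_inl.mpr hadj)
    rw [hd] at hlen
    rw [walk_support_of_length_one p hlen]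
    simp only [List.mem_cons, List.not_mem_nil, or_false]
    push_neg
    exact ⟨Ne.symm huw, Ne.symm hvw⟩
  · have hd : (graphJoin G H).dist (Sum.inl x) (Sum.inl y) = 2 :=
      graphJoin_dist_two_left hxy hadj
    rw [hd] at hlen
    obtain ⟨m, hum, hmv, hsup⟩ := walk_support_of_length_two p hlen
    rw [hsup]
    intro hmem
    simp only [List.mem_cons, List.not_mem_nil, or_false] at hmem
    rcases hmem with h | h | h
    · exact huw h.symm
    · subst h
      have haxz : G.Adj x z := graphJoin_adj_inl_inl.mp hum
      have hazy : G.Adj z y := graphJoin_adj_inl_inl.mp hmv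
      have e1 : Qx = Qz := hsame hQx hQz hxQ hzQ haxz
      have e2 : Qz = Qy := hsame hQz hQy hzQ hyQ hazy
      have : G.Adj x y := hclq Qx hQx (Finset.mem_coe.mpr hxQ)
        (Finset.mem_coe.mpr (by rw [e1, e2] at hxQ ⊢; exact hyQ)) hxy
      exact hadj this
    · exact hvw h.symm
  
lemma isGPSet_inr_of_witness [Nonempty α] (G : SimpleGraph α) (H : SimpleGraph β)
    (𝒬 : Finset (Finset β)) (hclq : ∀ Q ∈ 𝒬, H.IsClique (Q : Set β))
    (hind : ∀ Q ∈ 𝒬, ∀ Q' ∈ 𝒬, Q ≠ Q' → ∀ u ∈ Q, ∀ u' ∈ Q', 2 ≤ H.edist u u') :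
    (graphJoin G H).IsGPSet (Sum.inr '' (⋃ Q ∈ 𝒬, (Q : Set β))) := by
  have hsame : ∀ {Q Q' x y}, Q ∈ 𝒬 → Q' ∈ 𝒬 → x ∈ Q → y ∈ Q' → H.Adj x y → Q = Q' := by
    intro Q Q' x y hQ hQ' hx hy hadj
    by_contra hne
    have h2 := hind Q hQ Q' hQ' hne x hx y hy
    have h1 : H.edist x y ≤ 1 := by
      simpa using SimpleGraph.edist_le (Walk.cons hadj Walk.nil)
    have : (2 : ℕ∞) ≤ 1 := h2.trans h1
    norm_num at this
  rintro u v w hu hv hw huv huw hvw p hp hlen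
  obtain ⟨x, hx, rfl⟩ := hu
  obtain ⟨y, hy, rfl⟩ := hv
  obtain ⟨z, hz, rfl⟩ := hw
  simp only [Set.mem_iUnion, Finset.mem_coe, exists_prop] at hx hy hz
  obtain ⟨Qx, hQx, hxQ⟩ := hx
  obtain ⟨Qy, hQy, hyQ⟩ := hy
  obtain ⟨Qz, hQz, hzQ⟩ := hz
  have hxy : x ≠ y := fun h => huv (by rw [h])
  by_cases hadj : H.Adj x y
  · have hd : (graphJoin G H).dist (Sum.inr x) (Sum.inr y) = 1 :=
      SimpleGraph.dist_eq_one_iff_adj.mpr (graphJoin_adj_inr_inr.mpr hadj)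
    rw [hd] at hlen
    rw [walk_support_of_length_one p hlen]
    simp only [List.mem_cons, List.not_mem_nil, or_false]
    push_neg
    exact ⟨Ne.symm huw, Ne.symm hvw⟩
  · have hd : (graphJoin G H).dist (Sum.inr x) (Sum.inr y) = 2 :=
      graphJoin_dist_two_right hxy hadj
    rw [hd] at hlen
    obtain ⟨m, hum, hmv, hsup⟩ := walk_support_of_length_two p hlen
    rw [hsup]
    intro hmem
    simp only [List.mem_cons, List.not_mem_nil, or_false] at hmem
    rcases hmem with h | h | h
    · exact huw h.symm
    · subst h
      have haxz : H.Adj x z := graphJoin_adj_inr_inr.mp hum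
      have hazy : H.Adj z y := graphJoin_adj_inr_inr.mp hmv
      have e1 : Qx = Qz := hsame hQx hQz hxQ hzQ haxz
      have e2 : Qz = Qy := hsame hQz hQy hzQ hyQ hazy
      have : H.Adj x y := hclq Qx hQx (Finset.mem_coe.mpr hxQ)
        (Finset.mem_coe.mpr (by rw [e1, e2] at hxQ ⊢; exact hyQ)) hxy
      exact hadj this
    · exact hvw h.symm

end Aux

open SimpleGraph

/-- If `G` and `H` are finite graphs, each with at least one vertex, then
`gp(G + H) = max {ω(G) + ω(H), ρ(G), ρ(H)}`. -/
theorem gpNumber_graphJoin_eq_max_rho {α β : Type*} [Fintype α] [Fintype β]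
    [Nonempty α] [Nonempty β] (G : SimpleGraph α) (H : SimpleGraph β) :
    (graphJoin G H).gpNumber = max (G.cliqueNum + H.cliqueNum) (max G.rho H.rho) := by
  classical
  set J := graphJoin G H with hJdef
  apply le_antisymm
  · -- upper bound
    apply csSup_le
    · refine ⟨0, ∅, ?_, by simp⟩
      intro u v w hu
      exact absurd hu (Set.notMem_empty u)
    rintro n ⟨S, hS, rfl⟩
    set A : Set α := Sum.inl ⁻¹' S with hAdef
    set B : Set β := Sum.inr ⁻¹' S with hBdef
    have hSdecomp : S = Sum.inl '' A ∪ Sum.inr '' B := by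
      ext x
      cases x with
      | inl a => simp [hAdef]
      | inr b => simp [hBdef]
    have hdisj : Disjoint (Sum.inl '' A) (Sum.inr '' B : Set (α ⊕ β)) := by
      rw [Set.disjoint_left]
      rintro _ ⟨a, -, rfl⟩ ⟨b, -, h⟩
      exact Sum.inl_ne_inr h.symm
    have hcard : S.ncard = A.ncard + B.ncard := by
      rw [hSdecomp, Set.ncard_union_eq hdisj (Set.toFinite _) (Set.toFinite _),
        Set.ncard_image_of_injective _ Sum.inl_injective,
        Set.ncard_image_of_injective _ Sum.inr_injective]
    rcases Set.eq_empty_or_nonempty B with hB | hB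
    · have hSA : S = Sum.inl '' A := by
        rw [hSdecomp, hB]
        simp
      have h1 : A.ncard ≤ G.rho := ncard_le_rho_left G H A (hSA ▸ hS)
      have : S.ncard = A.ncard := by
        rw [hcard, hB]
        simp
      rw [this]
      exact le_trans h1 (le_trans (le_max_left _ _) (le_max_right _ _))
    rcases Set.eq_empty_or_nonempty A with hA | hA
    · have hSB : S = Sum.inr '' B := by
        rw [hSdecomp, hA]
        simp
      have h1 : B.ncard ≤ H.rho := ncard_le_rho_right G H B (hSB ▸ hS)
      have : S.ncard = B.ncard := by
        rw [hcard, hA]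
        simp
      rw [this]
      exact le_trans h1 (le_trans (le_max_right _ _) (le_max_right _ _))
    -- both nonempty: S splits into cliques
    have hAclq : G.IsClique A := by
      intro a ha a' ha' hne
      by_contra hadj
      obtain ⟨b, hb⟩ := hB
      have hd : J.dist (Sum.inl a) (Sum.inl a') = 2 := graphJoin_dist_two_left hne hadj
      set p : J.Walk (Sum.inl a) (Sum.inl a') :=
        Walk.cons (graphJoin_adj_inl_inr a b)
          (Walk.cons (graphJoin_adj_inr_inl b a') Walk.nil) with hp
      have hpath : p.IsPath := by
        rw [SimpleGraph.Walk.isPath_def]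
        simp [hp, hne]
      have hlen' : p.length = J.dist (Sum.inl a) (Sum.inl a') := by simp [hp, hd]
      have hnot := hS ha ha' hb
        (fun h => hne (Sum.inl_injective h))
        (Sum.inl_ne_inr) (Sum.inl_ne_inr) p hpath hlen'
      apply hnot
      simp [hp]
    have hBclq : H.IsClique B := by
      intro b hb b' hb' hne
      by_contra hadj
      obtain ⟨a, ha⟩ := hA
      have hd : J.dist (Sum.inr b) (Sum.inr b') = 2 := graphJoin_dist_two_right hne hadj
      set p : J.Walk (Sum.inr b) (Sum.inr b') :=
        Walk.cons (graphJoin_adj_inr_inl b a)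
          (Walk.cons (graphJoin_adj_inl_inr a b') Walk.nil) with hp
      have hpath : p.IsPath := by
        rw [SimpleGraph.Walk.isPath_def]
        simp [hp, hne]
      have hlen' : p.length = J.dist (Sum.inr b) (Sum.inr b') := by simp [hp, hd]
      have hnot := hS hb hb' ha
        (fun h => hne (Sum.inr_injective h))
        (Sum.inr_ne_inl) (Sum.inr_ne_inl) p hpath hlen'
      apply hnot
      simp [hp]
    have h1 : A.ncard ≤ G.cliqueNum := by
      have hc : G.IsClique (((Set.toFinite A).toFinset : Finset α) : Set α) := by
        rwa [Set.Finite.coe_toFinset]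
      have := SimpleGraph.IsClique.card_le_cliqueNum (tc := hc)
      rwa [← Set.ncard_eq_toFinset_card A (Set.toFinite A)] at this
    have h2 : B.ncard ≤ H.cliqueNum := by
      have hc : H.IsClique (((Set.toFinite B).toFinset : Finset β) : Set β) := by
        rwa [Set.Finite.coe_toFinset]
      have := SimpleGraph.IsClique.card_le_cliqueNum (tc := hc)
      rwa [← Set.ncard_eq_toFinset_card B (Set.toFinite B)] at this
    rw [hcard]
    exact le_trans (Nat.add_le_add h1 h2) (le_max_left _ _)
  · -- lower bound
    have hbdd := gp_bddAbove J
    refine max_le ?_ (max_le ?_ ?_)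
    · -- cliqueNum G + cliqueNum H
      obtain ⟨s, hs⟩ := G.exists_isNClique_cliqueNum
      obtain ⟨t, ht⟩ := H.exists_isNClique_cliqueNum
      set S : Set (α ⊕ β) := Sum.inl '' (s : Set α) ∪ Sum.inr '' (t : Set β) with hSdef
      have hclq : J.IsClique S := by
        rintro x hx y hy hne
        rcases hx with ⟨a, ha, rfl⟩ | ⟨b, hb, rfl⟩ <;>
          rcases hy with ⟨a', ha', rfl⟩ | ⟨b', hb', rfl⟩
        · exact graphJoin_adj_inl_inl.mpr
            (hs.isClique ha ha' (fun h => hne (by rw [h])))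
        · exact graphJoin_adj_inl_inr _ _
        · exact graphJoin_adj_inr_inl _ _
        · exact graphJoin_adj_inr_inr.mpr
            (ht.isClique hb hb' (fun h => hne (by rw [h])))
      have hdisj : Disjoint (Sum.inl '' (s : Set α)) (Sum.inr '' (t : Set β)) := by
        rw [Set.disjoint_left]
        rintro _ ⟨a, -, rfl⟩ ⟨b, -, h⟩
        exact Sum.inl_ne_inr h.symm
      have hcard : S.ncard = G.cliqueNum + H.cliqueNum := by
        rw [hSdef, Set.ncard_union_eq hdisj (Set.toFinite _) (Set.toFinite _),
          Set.ncard_image_of_injective _ Sum.inl_injective,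
          Set.ncard_image_of_injective _ Sum.inr_injective,
          Set.ncard_coe_finset, Set.ncard_coe_finset, hs.card_eq, ht.card_eq]
      exact le_csSup hbdd ⟨S, isGPSet_of_isClique hclq, hcard.symm⟩
    · -- rho G
      have hne : ({n | ∃ 𝒬 : Finset (Finset α),
          (∀ Q ∈ 𝒬, G.IsClique (Q : Set α)) ∧
          (∀ Q ∈ 𝒬, ∀ Q' ∈ 𝒬, Q ≠ Q' → ∀ u ∈ Q, ∀ u' ∈ Q', 2 ≤ G.edist u u') ∧
          n = (⋃ Q ∈ 𝒬, (Q : Set α)).ncard} : Set ℕ).Nonempty := by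
        refine ⟨0, ∅, by simp, by simp, by simp⟩
      have hmem := Nat.sSup_mem hne (rho_bddAbove G)
      obtain ⟨𝒬, hclq, hind, hval⟩ := hmem
      have hgp := isGPSet_inl_of_witness G H 𝒬 hclq hind
      have hcard : ((Sum.inl '' (⋃ Q ∈ 𝒬, (Q : Set α))) : Set (α ⊕ β)).ncard = G.rho := by
        rw [Set.ncard_image_of_injective _ Sum.inl_injective]
        exact hval.symm
      exact le_csSup hbdd ⟨_, hgp, hcard.symm⟩
    · -- rho H
      have hne : ({n | ∃ 𝒬 : Finset (Finset β),
          (∀ Q ∈ 𝒬, H.IsClique (Q : Set β)) ∧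
          (∀ Q ∈ 𝒬, ∀ Q' ∈ 𝒬, Q ≠ Q' → ∀ u ∈ Q, ∀ u' ∈ Q', 2 ≤ H.edist u u') ∧
          n = (⋃ Q ∈ 𝒬, (Q : Set β)).ncard} : Set ℕ).Nonempty := by
        refine ⟨0, ∅, by simp, by simp, by simp⟩
      have hmem := Nat.sSup_mem hne (rho_bddAbove H)
      obtain ⟨𝒬, hclq, hind, hval⟩ := hmem
      have hgp := isGPSet_inr_of_witness G H 𝒬 hclq hind
      have hcard : ((Sum.inr '' (⋃ Q ∈ 𝒬, (Q : Set β))) : Set (α ⊕ β)).ncard = H.rho := by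
        rw [Set.ncard_image_of_injective _ Sum.inr_injective]
        exact hval.symm
      exact le_csSup hbdd ⟨_, hgp, hcard.symm⟩
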